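/- For a greedy selection maximizing a monotone submodular function f with f(∅) = 0 over a ground set, the set R of size r obtained by iteratively adding the element with maximal marginal gain satisfies f(R) ≥ (1 - 1/e)·max_{|S|=r} f(S). -/
import Mathlib

lemma tele_aux {X : Type*} [DecidableEq X]
    (f : Finset X → ℝ)
    (hmono : ∀ A B : Finset X, A ⊆ B → f A ≤ f B)
    (hsub : ∀ A B : Finset X, A ⊆ B → ∀ x ∉ B,
      f (insert x A) - f A ≥ f (insert x B) - f B) :
    ∀ (T A : Finset X), f (A ∪ T) - f A ≤ ∑ x ∈ T, (f (insert x A) - f A) := by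
  intro T
  induction T using Finset.induction_on with
  | empty => intro A; simp
  | @insert a T ha ih =>
    intro A
    rw [Finset.sum_insert ha]
    have h1 : f (A ∪ insert a T) - f (A ∪ T) ≤ f (insert a A) - f A := by
      by_cases haT : a ∈ A ∪ T
      · have : A ∪ insert a T = A ∪ T := by
          ext y; simp only [Finset.mem_union, Finset.mem_insert]
          constructor
          · rintro (h | rfl | h)
            · exact Or.inl h
            · simpa using haT
            · exact Or.inr h
          · rintro (h | h)
            · exact Or.inl h
            · exact Or.inr (Or.inr h)
        rw [this]
        have := hmono A (insert a A) (Finset.subset_insert _ _)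
        linarith
      · have : A ∪ insert a T = insert a (A ∪ T) := by
          ext y; simp [Finset.mem_union, Finset.mem_insert]
        rw [this]
        exact hsub A (A ∪ T) Finset.subset_union_left a haT
    have h2 := ih A
    linarith

theorem stmt_17 {X : Type*} [Fintype X] [DecidableEq X]
    (f : Finset X → ℝ)
    (hmono : ∀ A B : Finset X, A ⊆ B → f A ≤ f B)
    (hsub : ∀ A B : Finset X, A ⊆ B → ∀ x ∉ B,
      f (insert x A) - f A ≥ f (insert x B) - f B)
    (hnonneg : ∀ A : Finset X, 0 ≤ f A)
    (hempty : f ∅ = 0)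
    (r : ℕ) (R : ℕ → Finset X) (hR0 : R 0 = ∅)
    (hgreedy : ∀ s < r, ∃ x : X, R (s + 1) = insert x (R s) ∧
      ∀ y : X, f (insert y (R s)) ≤ f (insert x (R s))) :
    ∀ S : Finset X, S.card = r → f (R r) ≥ (1 - 1 / Real.exp 1) * f S := by
  intro S hS
  rcases Nat.eq_zero_or_pos r with hr0 | hrpos
  · subst hr0
    have : S = ∅ := Finset.card_eq_zero.mp hS
    rw [this, hempty, hR0, hempty]
    simp
  have hr1 : (1 : ℝ) ≤ (r : ℝ) := by exact_mod_cast hrpos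
  have hrne : (r : ℝ) ≠ 0 := by positivity
  set OPT := f S with hOPT
  have hOPTnn : 0 ≤ OPT := hnonneg S
  set c : ℝ := 1 - 1 / (r : ℝ) with hc
  have h1r : 1 / (r : ℝ) ≤ 1 := by
    rw [div_le_one (by linarith)]; exact hr1
  have hc0 : 0 ≤ c := by rw [hc]; linarith
  -- main induction
  have key : ∀ s ≤ r, OPT - f (R s) ≤ c ^ s * OPT := by
    intro s hs
    induction s with
    | zero => simp [hR0, hempty]
    | succ s ih =>
      have hslt : s < r := hs
      have ihs := ih (le_of_lt hslt)
      obtain ⟨x, hRx, hxmax⟩ := hgreedy s hslt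
      set g : ℝ := f (insert x (R s)) - f (R s) with hg
      have hbound : OPT - f (R s) ≤ (r : ℝ) * g := by
        have h1 : OPT ≤ f (R s ∪ S) :=
          hmono S (R s ∪ S) Finset.subset_union_right
        have h2 := tele_aux f hmono hsub S (R s)
        have h3 : ∑ y ∈ S, (f (insert y (R s)) - f (R s)) ≤ (S.card : ℝ) * g := by
          calc ∑ y ∈ S, (f (insert y (R s)) - f (R s))
              ≤ ∑ _y ∈ S, g := by
                apply Finset.sum_le_sum
                intro y _
                have := hxmax y
                simp [hg]; linarith
            _ = (S.card : ℝ) * g := by rw [Finset.sum_const, nsmul_eq_mul]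
        rw [hS] at h3
        linarith
      have hstep : OPT - f (R (s + 1)) ≤ c * (OPT - f (R s)) := by
        rw [hRx]
        have : OPT - f (insert x (R s)) ≤ ((r : ℝ) - 1) * (OPT - f (R s)) / r := by
          rw [le_div_iff₀ (by linarith)]
          have : (OPT - f (insert x (R s))) * r = OPT * r - f (insert x (R s)) * r := by ring
          nlinarith [hbound]
        have heq : ((r : ℝ) - 1) * (OPT - f (R s)) / r = c * (OPT - f (R s)) := by
          rw [hc]; field_simp
        linarith [heq ▸ this]
      calc OPT - f (R (s + 1)) ≤ c * (OPT - f (R s)) := hstep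
        _ ≤ c * (c ^ s * OPT) := by
            apply mul_le_mul_of_nonneg_left ihs hc0
        _ = c ^ (s + 1) * OPT := by ring
  have hkey := key r le_rfl
  -- c ^ r ≤ exp (-1)
  have hcr : c ^ r ≤ Real.exp (-1) := by
    have h1 : c ≤ Real.exp (-(1 / (r : ℝ))) := by
      have := Real.add_one_le_exp (-(1 / (r : ℝ)))
      rw [hc]; linarith
    calc c ^ r ≤ Real.exp (-(1 / (r : ℝ))) ^ r := pow_le_pow_left₀ hc0 h1 r
      _ = Real.exp ((r : ℝ) * (-(1 / (r : ℝ)))) := by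
          rw [Real.exp_nat_mul]
      _ = Real.exp (-1) := by
          congr 1
          field_simp
  have hmul : c ^ r * OPT ≤ Real.exp (-1) * OPT :=
    mul_le_mul_of_nonneg_right hcr hOPTnn
  have hexp : Real.exp (-1) = 1 / Real.exp 1 := by
    rw [Real.exp_neg]; ring
  rw [ge_iff_le]
  calc (1 - 1 / Real.exp 1) * OPT = OPT - Real.exp (-1) * OPT := by rw [hexp]; ring
    _ ≤ OPT - c ^ r * OPT := by linarith
    _ ≤ f (R r) := by linarith
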